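/- arXiv:2312.17597 — 2 statements merged into one kernel-verified Lean document; each statement's English description precedes it below -/
import Mathlib

section
/- Let (C, D, M) be an ST-triple inside a triangulated category T. Then the heart T_M^0 of the t-structure (T_M^{≤0}, T_M^{≥0}) is covariantly finite in T, i.e., every object of T admits a left T_M^0-approximation. -/
open CategoryTheory Limits Pretriangulated

namespace STPaper

variable {T : Type*} [Category T] [Preadditive T] [HasZeroObject T]
  [HasShift T ℤ] [∀ n : ℤ, (CategoryTheory.shiftFunctor T n).Additive] [Pretriangulated T]

/-- The shift of a class of objects. -/
def shSet (S : Set T) (n : ℤ) : Set T := (CategoryTheory.shiftFunctor T n).obj '' S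

/-- The class `Y₁ ∗ Y₂`: objects `Z` fitting in a distinguished triangle
`Y₁ → Z → Y₂ → ΣY₁` with `Y₁ ∈ 𝒴₁` and `Y₂ ∈ 𝒴₂`. -/
def star (Y₁ Y₂ : Set T) : Set T :=
  {Z | ∃ (A B : T) (f : A ⟶ Z) (g : Z ⟶ B) (h : B ⟶ A⟦(1:ℤ)⟧),
    (Triangle.mk f g h ∈ distTriang T) ∧ A ∈ Y₁ ∧ B ∈ Y₂}

/-- The extension closure of a class of objects. -/
inductive filt (S : Set T) : T → Prop
  | of {X : T} (h : X ∈ S) : filt S X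
  | zero {X : T} (h : IsZero X) : filt S X
  | ext {A Z B : T} (f : A ⟶ Z) (g : Z ⟶ B) (h : B ⟶ A⟦(1:ℤ)⟧)
      (hT : Triangle.mk f g h ∈ distTriang T) (hA : filt S A) (hB : filt S B) : filt S Z

/-- The thick subcategory generated by a class of objects. -/
inductive thick (S : Set T) : T → Prop
  | of {X : T} (h : X ∈ S) : thick S X
  | zero {X : T} (h : IsZero X) : thick S X
  | shift {X : T} (hX : thick S X) (n : ℤ) : thick S (X⟦n⟧)
  | ext {A Z B : T} (f : A ⟶ Z) (g : Z ⟶ B) (h : B ⟶ A⟦(1:ℤ)⟧)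
      (hT : Triangle.mk f g h ∈ distTriang T) (hA : thick S A) (hB : thick S B) : thick S Z
  | smd {X Y : T} (i : X ⟶ Y) (r : Y ⟶ X) (hir : i ≫ r = 𝟙 X) (hY : thick S Y) : thick S X

/-- Two classes of objects coincide up to isomorphism. -/
def isoEq (S L : Set T) : Prop :=
  (∀ X ∈ S, ∃ Y ∈ L, Nonempty (X ≅ Y)) ∧ (∀ Y ∈ L, ∃ X ∈ S, Nonempty (X ≅ Y))

/-- A simple-minded collection. -/
structure IsSMC (S : Set T) : Prop where
  negVanish : ∀ X ∈ S, ∀ Y ∈ S, ∀ n : ℤ, n < 0 → ∀ f : X ⟶ Y⟦n⟧, f = 0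
  nonzero : ∀ X ∈ S, ¬ IsZero X
  endo : ∀ X ∈ S, ∀ f : X ⟶ X, f = 0 ∨ IsIso f
  noHom : ∀ X ∈ S, ∀ Y ∈ S, X ≠ Y → ∀ f : X ⟶ Y, f = 0
  generates : ∀ X : T, thick S X

/-- `T^{𝒮,≤0}` for a collection `S`. -/
def leS (S : Set T) : Set T :=
  {X | ∀ n : ℤ, 0 < n → ∀ Y ∈ S, ∀ f : X⟦n⟧ ⟶ Y, f = 0}

/-- `Σ^{0}Filt(S) ∗ Σ^{-1}Filt(S) ∗ ⋯ ∗ Σ^{-l}Filt(S)`. -/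
def geChainS (S : Set T) : ℕ → Set T
  | 0 => {X | filt S X}
  | (l+1) => star (geChainS S l) (shSet {X | filt S X} (-(l+1 : ℤ)))

/-- `T^{𝒮,≥0}`. -/
def geS (S : Set T) : Set T := ⋃ l, geChainS S l

/-- `Σ^{l}Filt(S) ∗ Σ^{l-1}Filt(S) ∗ ⋯ ∗ Filt(S)`. -/
def leChainS (S : Set T) : ℕ → Set T
  | 0 => {X | filt S X}
  | (l+1) => star (shSet {X | filt S X} (l+1 : ℤ)) (leChainS S l)

/-- A `t`-structure `(Le, Ge) = (T^{≤0}, T^{≥0})` on `T`. -/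
structure IsTStr (Le Ge : Set T) : Prop where
  le_shift : ∀ X ∈ Le, X⟦(1:ℤ)⟧ ∈ Le
  ge_shift : ∀ X ∈ Ge, X⟦(-1:ℤ)⟧ ∈ Ge
  hom_zero : ∀ X ∈ Le, ∀ Y ∈ Ge, ∀ f : X ⟶ Y⟦(-1:ℤ)⟧, f = 0
  exhaust : ∀ Z : T, Z ∈ star Le (shSet Ge (-1))

/-- The heart of a pair of classes. -/
def heart (Le Ge : Set T) : Set T := Le ∩ Ge

/-- A bounded `t`-structure. -/
structure IsBoundedTStr (Le Ge : Set T) : Prop where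
  toIsTStr : IsTStr Le Ge
  bddRight : ∀ X : T, ∃ n : ℤ, X⟦n⟧ ∈ Le
  bddLeft : ∀ X : T, ∃ n : ℤ, X⟦n⟧ ∈ Ge

/-- A simple object of the heart `H`: a nonzero object such that in any distinguished
triangle `A → X → B → ΣA` with `A, B ∈ H`, one of `A`, `B` vanishes. -/
def heartSimple (H : Set T) (X : T) : Prop :=
  X ∈ H ∧ ¬ IsZero X ∧ ∀ (A B : T) (f : A ⟶ X) (g : X ⟶ B) (h : B ⟶ A⟦(1:ℤ)⟧),
    (Triangle.mk f g h ∈ distTriang T) → A ∈ H → B ∈ H → IsZero A ∨ IsZero B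

/-- An algebraic `t`-structure: a bounded `t`-structure whose heart is a length category,
i.e. every object of the heart is a finite iterated extension of simple objects of the heart. -/
def IsAlgTStr (Le Ge : Set T) : Prop :=
  IsBoundedTStr Le Ge ∧ ∀ X ∈ heart Le Ge, filt {Y | heartSimple (heart Le Ge) Y} X


section Silting

variable (T) in
/-- A Krull–Schmidt category: every object is a finite biproduct of objects with local
endomorphism rings. -/
def IsKrullSchmidt [HasFiniteBiproducts T] : Prop :=
  ∀ X : T, ∃ (n : ℕ) (f : Fin n → T),
    (∀ i, IsLocalRing (End (f i))) ∧ Nonempty (X ≅ ⨁ f)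

/-- `X` belongs to `add M`: it is a direct summand of a finite direct sum of copies of `M`. -/
def addObj [HasFiniteBiproducts T] (M : T) (X : T) : Prop :=
  ∃ (n : ℕ) (i : X ⟶ ⨁ (fun _ : Fin n => M)) (r : (⨁ (fun _ : Fin n => M)) ⟶ X),
    i ≫ r = 𝟙 X

/-- The subcategory `add M`. -/
def addSet [HasFiniteBiproducts T] (M : T) : Set T := {X | addObj M X}

/-- A silting object of `T`. -/
def IsSiltingObj (M : T) : Prop :=
  (∀ n : ℤ, 0 < n → ∀ f : M ⟶ M⟦n⟧, f = 0) ∧ ∀ X : T, thick {M} X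

/-- A basic object: it has no repeated (nonzero) direct summand. -/
def IsBasic [HasBinaryBiproducts T] (M : T) : Prop :=
  ¬ ∃ (X Y : T), ¬ IsZero X ∧ Nonempty (M ≅ (X ⊞ X) ⊞ Y)

/-- A silting subcategory of `T`. -/
structure IsSiltingSubcat [HasBinaryBiproducts T] (M : Set T) : Prop where
  isoClosed : ∀ {X Y : T}, (X ≅ Y) → X ∈ M → Y ∈ M
  zeroMem : ∀ X : T, IsZero X → X ∈ M
  sumMem : ∀ X ∈ M, ∀ Y ∈ M, (X ⊞ Y) ∈ M
  smdMem : ∀ (X Y : T) (i : X ⟶ Y) (r : Y ⟶ X), i ≫ r = 𝟙 X → Y ∈ M → X ∈ M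
  presilting : ∀ X ∈ M, ∀ Y ∈ M, ∀ n : ℤ, 0 < n → ∀ f : X ⟶ Y⟦n⟧, f = 0
  generates : ∀ X : T, thick M X

/-- `T_{ℳ,≤0} = {X | Hom(ℳ, Σ^{>0} X) = 0}`. -/
def leM (M : Set T) : Set T :=
  {X | ∀ n : ℤ, 0 < n → ∀ Y ∈ M, ∀ f : Y ⟶ X⟦n⟧, f = 0}

/-- `Σ^l ℳ ∗ Σ^{l-1} ℳ ∗ ⋯ ∗ ℳ`. -/
def geChainM (M : Set T) : ℕ → Set T
  | 0 => M
  | (l+1) => star (shSet M (l+1 : ℤ)) (geChainM M l)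

/-- `T_{ℳ,≥0} = ⋃_{l ≥ 0} Σ^l ℳ ∗ ⋯ ∗ ℳ`. -/
def geM (M : Set T) : Set T := ⋃ l, geChainM M l

/-- `ℳ ∗ Σℳ ∗ ⋯ ∗ Σ^l ℳ`. -/
def leChainM (M : Set T) : ℕ → Set T
  | 0 => M
  | (l+1) => star (leChainM M l) (shSet M (l+1 : ℤ))

/-- A co-`t`-structure `(Ge, Le) = (T_{≥0}, T_{≤0})` on `T`. -/
structure IsCotStr [HasBinaryBiproducts T] (Ge Le : Set T) : Prop where
  isoGe : ∀ {X Y : T}, (X ≅ Y) → X ∈ Ge → Y ∈ Ge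
  zeroGe : ∀ X : T, IsZero X → X ∈ Ge
  sumGe : ∀ X ∈ Ge, ∀ Y ∈ Ge, (X ⊞ Y) ∈ Ge
  smdGe : ∀ (X Y : T) (i : X ⟶ Y) (r : Y ⟶ X), i ≫ r = 𝟙 X → Y ∈ Ge → X ∈ Ge
  isoLe : ∀ {X Y : T}, (X ≅ Y) → X ∈ Le → Y ∈ Le
  zeroLe : ∀ X : T, IsZero X → X ∈ Le
  sumLe : ∀ X ∈ Le, ∀ Y ∈ Le, (X ⊞ Y) ∈ Le
  smdLe : ∀ (X Y : T) (i : X ⟶ Y) (r : Y ⟶ X), i ≫ r = 𝟙 X → Y ∈ Le → X ∈ Le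
  ge_shift : ∀ X ∈ Ge, X⟦(-1:ℤ)⟧ ∈ Ge
  le_shift : ∀ X ∈ Le, X⟦(1:ℤ)⟧ ∈ Le
  hom_zero : ∀ X ∈ Ge, ∀ Y ∈ Le, ∀ f : X⟦(-1:ℤ)⟧ ⟶ Y, f = 0
  exhaust : ∀ Z : T, Z ∈ star (shSet Ge (-1)) Le

/-- A bounded co-`t`-structure. -/
structure IsBoundedCot [HasBinaryBiproducts T] (Ge Le : Set T) : Prop where
  toCot : IsCotStr Ge Le
  bddGe : ∀ X : T, ∃ n : ℤ, X⟦n⟧ ∈ Ge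
  bddLe : ∀ X : T, ∃ n : ℤ, X⟦n⟧ ∈ Le

end Silting

section K0

variable (T) in
/-- Relations defining the Grothendieck group of the triangulated category `T`. -/
def triRel : Set (FreeAbelianGroup T) :=
  {x | ∃ Tr : Triangle T, (Tr ∈ distTriang T) ∧
    x = FreeAbelianGroup.of Tr.obj₂ - FreeAbelianGroup.of Tr.obj₁ - FreeAbelianGroup.of Tr.obj₃}

variable (T) in
/-- The Grothendieck group `K₀(T)` of the triangulated category `T`. -/
abbrev K0 : Type _ := FreeAbelianGroup T ⧸ AddSubgroup.closure (triRel T)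

/-- The class of an object of `T` in `K₀(T)`. -/
def K0mk (X : T) : K0 T := QuotientAddGroup.mk (FreeAbelianGroup.of X)

/-- An indecomposable object: nonzero, and it admits no nontrivial idempotent endomorphism. -/
def Indec (X : T) : Prop :=
  ¬ IsZero X ∧ ∀ e : X ⟶ X, e ≫ e = e → e = 0 ∨ e = 𝟙 X

/-- `ι` is a complete set of representatives of the isomorphism classes of indecomposable
objects of `ℳ`. -/
def IndReps (M : Set T) (ι : Set T) : Prop :=
  (∀ X ∈ ι, X ∈ M ∧ Indec X) ∧
  (∀ Y, Y ∈ M → Indec Y → ∃ X ∈ ι, Nonempty (X ≅ Y)) ∧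
  (∀ X ∈ ι, ∀ Y ∈ ι, X ≠ Y → IsEmpty (X ≅ Y))

/-- Relations defining the Grothendieck group of the heart `H`, coming from distinguished
triangles of `T` all of whose vertices lie in `H` (i.e. short exact sequences in `H`). -/
def heartRel (H : Set T) : Set (FreeAbelianGroup ↥H) :=
  {x | ∃ (A Z B : ↥H) (f : (A : T) ⟶ (Z : T)) (g : (Z : T) ⟶ (B : T))
    (h : (B : T) ⟶ (A : T)⟦(1:ℤ)⟧), (Triangle.mk f g h ∈ distTriang T) ∧
      x = FreeAbelianGroup.of Z - FreeAbelianGroup.of A - FreeAbelianGroup.of B}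

/-- The Grothendieck group `K₀(H)` of a heart `H ⊆ T`. -/
abbrev K0Heart (H : Set T) : Type _ := FreeAbelianGroup ↥H ⧸ AddSubgroup.closure (heartRel H)

/-- The class of an object of `H` in `K₀(H)`. -/
def K0Hmk {H : Set T} (X : ↥H) : K0Heart H := QuotientAddGroup.mk (FreeAbelianGroup.of X)

end K0

section STTriple

variable (R : Type*) [CommRing R] [IsArtinianRing R] [CategoryTheory.Linear R T]

/-- The aisle `T_M^{≤ n} = {X | Hom(M, Σ^{> n} X) = 0}`. -/
def tleMn (M : T) (n : ℤ) : Set T :=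
  {X | ∀ k : ℤ, n < k → ∀ f : M ⟶ X⟦k⟧, f = 0}

/-- The co-aisle `T_M^{≥ n} = {X | Hom(M, Σ^{< n} X) = 0}`. -/
def tgeMn (M : T) (n : ℤ) : Set T :=
  {X | ∀ k : ℤ, k < n → ∀ f : M ⟶ X⟦k⟧, f = 0}

/-- The heart `T_M^0` of the `t`-structure associated with a silting object `M`. -/
def heartM (M : T) : Set T := tleMn M 0 ∩ tgeMn M 0

/-- An ST-triple `(C, D, M)` inside `T` (over the commutative artinian base ring `R`). -/
structure IsSTTriple (C D : Set T) (M : T) : Prop where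
  thickC : ∀ X : T, thick C X → X ∈ C
  thickD : ∀ X : T, thick D X → X ∈ D
  memC : M ∈ C
  presilting : ∀ n : ℤ, 0 < n → ∀ f : M ⟶ M⟦n⟧, f = 0
  generates : ∀ X : T, X ∈ C ↔ thick {M} X
  finLength : ∀ X : T, IsFiniteLength R (M ⟶ X)
  tstr : IsTStr (tleMn M 0) (tgeMn M 0)
  exhaustT : ∀ X : T, ∃ n : ℤ, X ∈ tleMn M n
  eqD : ∀ X : T, X ∈ D ↔ ∃ n : ℤ, X ∈ tgeMn M n

variable {R}

/-- `S` is a direct sum of a complete set of representatives of the simple objects of the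
heart `H`. -/
def IsSumOfSimples [HasFiniteBiproducts T] (H : Set T) (S : T) : Prop :=
  ∃ (n : ℕ) (f : Fin n → T),
    (∀ i, heartSimple H (f i)) ∧
    (∀ Y : T, heartSimple H Y → ∃ i, Nonempty (f i ≅ Y)) ∧
    (∀ i j, i ≠ j → IsEmpty (f i ≅ f j)) ∧ Nonempty (S ≅ ⨁ f)

/-- `S` is a complete set of representatives of the isomorphism classes of simple objects
of the heart of the `t`-structure associated with `M`. -/
def heartSimplesReps (M : T) (S : Set T) : Prop :=
  (∀ X ∈ S, heartSimple (heartM M) X) ∧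
  (∀ Y : T, heartSimple (heartM M) Y → ∃ X ∈ S, Nonempty (X ≅ Y)) ∧
  (∀ X ∈ S, ∀ Y ∈ S, X ≠ Y → IsEmpty (X ≅ Y))

/-- A simple-minded collection of the (thick) subcategory `D ⊆ T`. -/
structure IsSMCof (D : Set T) (S : Set T) : Prop where
  subset : S ⊆ D
  negVanish : ∀ X ∈ S, ∀ Y ∈ S, ∀ n : ℤ, n < 0 → ∀ f : X ⟶ Y⟦n⟧, f = 0
  nonzero : ∀ X ∈ S, ¬ IsZero X
  endo : ∀ X ∈ S, ∀ f : X ⟶ X, f = 0 ∨ IsIso f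
  noHom : ∀ X ∈ S, ∀ Y ∈ S, X ≠ Y → ∀ f : X ⟶ Y, f = 0
  generates : ∀ X : T, X ∈ D ↔ thick S X

/-- A silting object of the (thick) subcategory `C ⊆ T`. -/
def IsSiltingOfC (C : Set T) (M : T) : Prop :=
  M ∈ C ∧ (∀ n : ℤ, 0 < n → ∀ f : M ⟶ M⟦n⟧, f = 0) ∧ ∀ X : T, X ∈ C ↔ thick {M} X

end STTriple

section Aux

set_option linter.unusedSectionVars false

/-- Composition of shifts, with prescribed total. -/
noncomputable def shIso (a b c : ℤ) (h : a + b = c) (X : T) : (X⟦a⟧)⟦b⟧ ≅ X⟦c⟧ :=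
  (shiftFunctorAdd' T a b c h).symm.app X

/-- The adjunction equivalence `(M⟦-k⟧ ⟶ Z) ≃ (M ⟶ Z⟦k⟧)`. -/
noncomputable def conjE (M Z : T) (k : ℤ) : ((M⟦(-k : ℤ)⟧ : T) ⟶ Z) ≃ (M ⟶ Z⟦k⟧) :=
  (shiftEquiv' T (-k) k (neg_add_cancel k)).toAdjunction.homEquiv M Z

lemma conjE_zero (M Z : T) (k : ℤ) : conjE M Z k 0 = 0 := by
  rw [conjE]
  erw [Adjunction.homEquiv_unit]
  change _ ≫ (shiftFunctor T k).map 0 = 0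
  rw [Functor.map_zero]
  exact comp_zero

lemma conjE_comp (M : T) {Z Z' : T} (k : ℤ) (u : (M⟦(-k : ℤ)⟧ : T) ⟶ Z) (v : Z ⟶ Z') :
    conjE M Z' k (u ≫ v) = conjE M Z k u ≫ (shiftFunctor T k).map v :=
  Adjunction.homEquiv_naturality_right _ _ _

lemma conjE_eq_zero_iff (M Z : T) (k : ℤ) (u : (M⟦(-k : ℤ)⟧ : T) ⟶ Z) :
    conjE M Z k u = 0 ↔ u = 0 := by
  constructor
  · intro h
    exact (conjE M Z k).injective (h.trans (conjE_zero M Z k).symm)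
  · rintro rfl
    exact conjE_zero M Z k

/-- Vanishing of maps from `M` into objects isomorphic to a big enough shift
of an object of `T_M^{≤ m}`. -/
lemma hom_zero_of_iso_shift {M A W : T} {m j : ℤ} (hA : A ∈ tleMn M m) (e : W ≅ A⟦j⟧)
    (hj : m < j) (f : M ⟶ W) : f = 0 := by
  have h := hA j hj (f ≫ e.hom)
  have : f = (f ≫ e.hom) ≫ e.inv := by simp
  rw [this, h, zero_comp]

lemma tleMn_iso {M X Y : T} {m : ℤ} (e : X ≅ Y) (hX : X ∈ tleMn M m) : Y ∈ tleMn M m := by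
  intro k hk f
  have h := hX k hk (f ≫ (shiftFunctor T k).map e.inv)
  have : f = (f ≫ (shiftFunctor T k).map e.inv) ≫ (shiftFunctor T k).map e.hom := by
    rw [Category.assoc, ← Functor.map_comp, e.inv_hom_id, CategoryTheory.Functor.map_id, Category.comp_id]
  rw [this, h, zero_comp]

lemma tgeMn_iso {M X Y : T} {m : ℤ} (e : X ≅ Y) (hX : X ∈ tgeMn M m) : Y ∈ tgeMn M m := by
  intro k hk f
  have h := hX k hk (f ≫ (shiftFunctor T k).map e.inv)
  have : f = (f ≫ (shiftFunctor T k).map e.inv) ≫ (shiftFunctor T k).map e.hom := by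
    rw [Category.assoc, ← Functor.map_comp, e.inv_hom_id, CategoryTheory.Functor.map_id, Category.comp_id]
  rw [this, h, zero_comp]

/-- Factoring maps `M ⟶ Y⟦k⟧` through the middle of a triangle when the relevant
shifted Hom into the first object vanishes. -/
lemma factor_through_cone {M A X Y : T} {u : A ⟶ X} {p : X ⟶ Y} {δ : Y ⟶ (A⟦(1 : ℤ)⟧ : T)}
    (hT : Triangle.mk u p δ ∈ distTriang T) (k : ℤ)
    (hvanish : ∀ g : M ⟶ ((A⟦(1 : ℤ)⟧ : T)⟦k⟧ : T), g = 0)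
    (f : M ⟶ Y⟦k⟧) : ∃ f' : M ⟶ X⟦k⟧, f = f' ≫ (shiftFunctor T k).map p := by
  set fh := (conjE M Y k).symm f with hfh
  have hf : conjE M Y k fh = f := Equiv.apply_symm_apply _ _
  have h1 : fh ≫ δ = 0 := by
    rw [← conjE_eq_zero_iff M _ k, conjE_comp, hf]
    exact hvanish _
  obtain ⟨gh, hg⟩ := Triangle.coyoneda_exact₃ _ hT fh h1
  refine ⟨conjE M X k gh, ?_⟩
  exact hf.symm.trans ((congrArg (conjE M Y k) hg).trans (conjE_comp M k gh p))

variable {R : Type*} [CommRing R] [IsArtinianRing R] [CategoryTheory.Linear R T]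

/-- Killing the top cohomology of an object of `T_M^{≤ n+1}`, by induction on the number of
generators of `Hom(M, X⟦n+1⟧)`. -/
lemma kill_top {C D : Set T} {M : T} (hST : IsSTTriple R C D M) (n : ℤ) (hn : 0 ≤ n) :
    ∀ (r : ℕ) (X : T), X ∈ tleMn M (n + 1) →
      ∀ gen : Fin r → (M ⟶ (X⟦n + 1⟧ : T)), Submodule.span R (Set.range gen) = ⊤ →
      ∃ (X' : T) (p : X ⟶ X'), X' ∈ tleMn M n ∧
        ∀ H' ∈ tleMn M (0 : ℤ), ∀ g : X ⟶ H', ∃ h : X' ⟶ H', p ≫ h = g := by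
  have hM : M ∈ tleMn M 0 := hST.presilting
  intro r
  induction r with
  | zero =>
    intro X hX gen hgen
    have htriv : ∀ f : M ⟶ (X⟦n + 1⟧ : T), f = 0 := by
      intro f
      have hmem : f ∈ (⊤ : Submodule R (M ⟶ (X⟦n + 1⟧ : T))) := Submodule.mem_top
      rw [← hgen, Set.range_eq_empty, Submodule.span_empty, Submodule.mem_bot] at hmem
      exact hmem
    refine ⟨X, 𝟙 X, ?_, fun H' _ g => ⟨g, by simp⟩⟩
    intro k hk f
    rcases eq_or_lt_of_le (by omega : n + 1 ≤ k) with h | h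
    · subst h
      exact htriv f
    · exact hX k h f
  | succ r ih =>
    intro X hX gen hgen
    set u := (conjE M X (n + 1)).symm (gen 0) with hu
    have hu' : conjE M X (n + 1) u = gen 0 := Equiv.apply_symm_apply _ _
    obtain ⟨Y, p, δ, hT⟩ := Pretriangulated.distinguished_cocone_triangle u
    -- the factoring property through `p` in degrees `> n`
    have hfac : ∀ k : ℤ, n < k → ∀ f : M ⟶ (Y⟦k⟧ : T),
        ∃ f' : M ⟶ (X⟦k⟧ : T), f = f' ≫ (shiftFunctor T k).map p := by
      intro k hk f
      refine factor_through_cone hT k ?_ f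
      intro g
      exact hom_zero_of_iso_shift hM
        (((shiftFunctor T k).mapIso (shIso (-(n + 1)) 1 (-n) (by ring) M)) ≪≫
          shIso (-n) k (-n + k) rfl M) (by omega) g
    -- `Y` lies in `T_M^{≤ n+1}`
    have hY : Y ∈ tleMn M (n + 1) := by
      intro k hk f
      obtain ⟨f', hf'⟩ := hfac k (by omega) f
      rw [hf', hX k hk f', zero_comp]
    -- `gen 0` dies in `Y`
    have hdead : gen 0 ≫ (shiftFunctor T (n + 1)).map p = 0 := by
      rw [← hu', ← conjE_comp]
      have : u ≫ p = 0 := Pretriangulated.comp_distTriang_mor_zero₁₂ _ hT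
      rw [this, conjE_zero]
    -- the images of the remaining generators generate
    set gen' : Fin r → (M ⟶ (Y⟦n + 1⟧ : T)) :=
      fun i => gen i.succ ≫ (shiftFunctor T (n + 1)).map p with hgen'def
    have hgen' : Submodule.span R (Set.range gen') = ⊤ := by
      rw [eq_top_iff]
      intro y _
      obtain ⟨f', hf'⟩ := hfac (n + 1) (by omega) y
      have hf'mem : f' ∈ Submodule.span R (Set.range gen) := hgen ▸ Submodule.mem_top
      obtain ⟨c, hc⟩ := (Submodule.mem_span_range_iff_exists_fun R).mp hf'mem
      have : y = ∑ i, c i • (gen i ≫ (shiftFunctor T (n + 1)).map p) := by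
        rw [hf', ← hc, Preadditive.sum_comp]
        congr 1
        funext i
        rw [CategoryTheory.Linear.smul_comp]
      rw [this, Fin.sum_univ_succ, hdead, smul_zero, zero_add]
      refine Submodule.sum_mem _ (fun i _ => ?_)
      exact Submodule.smul_mem _ _ (Submodule.subset_span ⟨i, rfl⟩)
    obtain ⟨X', q, hX', hq⟩ := ih Y hY gen' hgen'
    refine ⟨X', p ≫ q, hX', ?_⟩
    intro H' hH' g
    -- `g` factors through `p`
    have hug : u ≫ g = 0 := by
      rw [← conjE_eq_zero_iff M _ (n + 1), conjE_comp, hu']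
      exact hH' (n + 1) (by omega) _
    obtain ⟨h₁, hh₁⟩ := Triangle.yoneda_exact₂ _ hT g hug
    obtain ⟨h₂, hh₂⟩ := hq H' hH' h₁
    exact ⟨h₂, by rw [Category.assoc, hh₂]; exact hh₁.symm⟩

/-- Left `T_M^{≤0}`-approximation of any object of `T_M^{≤ r}`. -/
lemma approx_le0 {C D : Set T} {M : T} (hST : IsSTTriple R C D M) :
    ∀ (r : ℕ) (X : T), X ∈ tleMn M (r : ℤ) →
      ∃ (X' : T) (p : X ⟶ X'), X' ∈ tleMn M 0 ∧
        ∀ H' ∈ tleMn M (0 : ℤ), ∀ g : X ⟶ H', ∃ h : X' ⟶ H', p ≫ h = g := by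
  intro r
  induction r with
  | zero =>
    intro X hX
    exact ⟨X, 𝟙 X, by exact_mod_cast hX, fun H' _ g => ⟨g, by simp⟩⟩
  | succ r ih =>
    intro X hX
    have hX' : X ∈ tleMn M ((r : ℤ) + 1) := by
      intro k hk f
      exact hX k (by push_cast; omega) f
    have hfl := hST.finLength (X⟦(r : ℤ) + 1⟧ : T)
    have hN : IsNoetherian R (M ⟶ (X⟦(r : ℤ) + 1⟧ : T)) :=
      (isFiniteLength_iff_isNoetherian_isArtinian.mp hfl).1
    obtain ⟨m, gen, hgen⟩ :=
      Module.Finite.exists_fin (R := R) (M := (M ⟶ (X⟦(r : ℤ) + 1⟧ : T)))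
    obtain ⟨Y, p, hY, hp⟩ := kill_top hST (r : ℤ) (by positivity) m X hX' gen hgen
    obtain ⟨X', q, hX'', hq⟩ := ih Y hY
    refine ⟨X', p ≫ q, hX'', ?_⟩
    intro H' hH' g
    obtain ⟨h₁, hh₁⟩ := hp H' hH' g
    obtain ⟨h₂, hh₂⟩ := hq H' hH' h₁
    exact ⟨h₂, by rw [Category.assoc, hh₂, hh₁]⟩

/-- The heart truncation of an object of `T_M^{≤0}`. -/
lemma heart_trunc {C D : Set T} {M : T} (hST : IsSTTriple R C D M) (X' : T)
    (hX' : X' ∈ tleMn M 0) :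
    ∃ (H : T) (σ : X' ⟶ H), H ∈ heartM M ∧
      ∀ H' ∈ heartM M, ∀ q : X' ⟶ H', ∃ h : H ⟶ H', σ ≫ h = q := by
  obtain ⟨A, B, a, b, c, hTri, hA, hB⟩ := hST.tstr.exhaust ((X'⟦(-1 : ℤ)⟧ : T))
  obtain ⟨G, hG, hGB⟩ := hB
  subst hGB
  have h3 : ((Triangle.mk a b c).rotate.rotate.rotate) ∈ distTriang T :=
    Pretriangulated.rot_of_distTriang _ (Pretriangulated.rot_of_distTriang _
      (Pretriangulated.rot_of_distTriang _ hTri))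
  set e : ((X'⟦(-1 : ℤ)⟧ : T)⟦(1 : ℤ)⟧ : T) ≅ X' := shiftNegShift X' (1 : ℤ) with he
  set rot3 := (Triangle.mk a b c).rotate.rotate.rotate with hrot3
  set Tri' := Triangle.mk (rot3.mor₁ ≫ e.hom) (e.inv ≫ rot3.mor₂) rot3.mor₃ with hTri'def
  have hTri' : Tri' ∈ distTriang T := by
    refine Pretriangulated.isomorphic_distinguished _ h3 _ ?_
    exact Triangle.isoMk Tri' rot3 (Iso.refl rot3.obj₁) e.symm (Iso.refl rot3.obj₃)
      (by show (rot3.mor₁ ≫ e.hom) ≫ e.inv = (Iso.refl _).hom ≫ rot3.mor₁; exact (Category.assoc _ _ _).trans ((congrArg (fun t => rot3.mor₁ ≫ t) e.hom_inv_id).trans ((Category.comp_id _).trans (Category.id_comp _).symm)))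
      (by show (e.inv ≫ rot3.mor₂) ≫ (Iso.refl _).hom = e.symm.hom ≫ rot3.mor₂; simp)
      (by show rot3.mor₃ ≫ (𝟙 rot3.obj₁)⟦(1:ℤ)⟧' = (𝟙 rot3.obj₃) ≫ rot3.mor₃; simp)
  set H := rot3.obj₃ with hH
  have hHge : H ∈ tgeMn M 0 := tgeMn_iso (shiftNegShift G (1 : ℤ)).symm hG
  have hHle : H ∈ tleMn M 0 := by
    intro k hk f
    set fh := (conjE M H k).symm f with hfh
    have hf : conjE M H k fh = f := Equiv.apply_symm_apply _ _
    have h1 : fh ≫ Tri'.mor₃ = 0 := by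
      rw [← conjE_eq_zero_iff M _ k, conjE_comp M k fh Tri'.mor₃, hf]
      refine hom_zero_of_iso_shift hA
        (((shiftFunctor T k).mapIso (shIso 1 1 2 (by ring) A)) ≪≫
          shIso 2 k (2 + k) rfl A) (by omega) _
    obtain ⟨gh, hg⟩ := Triangle.coyoneda_exact₃ _ hTri' fh h1
    have : f = conjE M X' k gh ≫ (shiftFunctor T k).map Tri'.mor₂ := by
      rw [← hf, hg]
      exact conjE_comp M k gh _
    rw [this, hX' k hk (conjE M X' k gh), zero_comp]
    rfl
  refine ⟨H, Tri'.mor₂, ⟨hHle, hHge⟩, ?_⟩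
  intro H' hH' q
  have hw : Tri'.mor₁ ≫ q = 0 := by
    set E2 := (shiftEquiv' T (1 : ℤ) (-1 : ℤ) (by ring)).toAdjunction.homEquiv A H' with hE2
    have hE2z : E2 0 = 0 := by
      simp [hE2, Adjunction.homEquiv_apply]
    have : E2 (Tri'.mor₁ ≫ q) = 0 := hST.tstr.hom_zero A hA H' hH'.2 _
    exact E2.injective (this.trans hE2z.symm)
  obtain ⟨h, hh⟩ := Triangle.yoneda_exact₂ _ hTri' q hw
  exact ⟨h, hh.symm⟩

end Aux
/-- for an ST-triple `(C, D, M)` inside `T`, the heart `T_M^0` is covariantly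
finite in `T`: every object of `T` admits a left `T_M^0`-approximation. -/
theorem stmt12 {R : Type*} [CommRing R] [IsArtinianRing R] [CategoryTheory.Linear R T]
    [IsIdempotentComplete T]
    (C D : Set T) (M : T) (hST : IsSTTriple R C D M) :
    ∀ X : T, ∃ H, H ∈ heartM M ∧ ∃ f : X ⟶ H,
      ∀ H', H' ∈ heartM M → ∀ g : X ⟶ H', ∃ h : H ⟶ H', f ≫ h = g := by
  intro X
  obtain ⟨n₀, hn₀⟩ := hST.exhaustT X
  have hX : X ∈ tleMn M ((n₀.toNat : ℕ) : ℤ) := by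
    intro k hk f
    exact hn₀ k (lt_of_le_of_lt (Int.self_le_toNat n₀) hk) f
  obtain ⟨X', p, hX', hp⟩ := approx_le0 hST n₀.toNat X hX
  obtain ⟨H, σ, hH, hσ⟩ := heart_trunc hST X' hX'
  refine ⟨H, hH, p ≫ σ, ?_⟩
  intro H' hH' g
  obtain ⟨q, hq⟩ := hp H' hH'.1 g
  obtain ⟨h, hh⟩ := hσ H' hH' q
  exact ⟨h, by rw [Category.assoc, hh, hq]⟩

end STPaper
end

section
/- Let (C, D, M) be an ST-triple inside a triangulated category T, let X ∈ C and Y ∈ T. Then the canonical map Hom_T(X, Y) → Hom_T(X, σ_M^{≥ -n}(Y)) is an isomorphism for all sufficiently large n; in particular Hom_T(X, Y) ≅ lim_{n∈ℕ} Hom_T(X, σ_M^{≥ -n}(Y)). -/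
open CategoryTheory Limits Pretriangulated

namespace STPaper

variable {T : Type*} [Category T] [Preadditive T] [HasZeroObject T]
  [HasShift T ℤ] [∀ n : ℤ, (CategoryTheory.shiftFunctor T n).Additive] [Pretriangulated T]

lemma tleMn_shift {M Z : T} {m : ℤ} (hZ : Z ∈ tleMn M m) (j : ℤ) :
    Z⟦j⟧ ∈ tleMn M (m - j) := by
  intro k hk f
  have e := (shiftFunctorAdd' T j k (j + k) rfl).app Z
  have h0 : f ≫ e.inv = 0 := hZ (j + k) (by omega) _
  calc f = (f ≫ e.inv) ≫ e.hom := by simp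
  _ = 0 := by rw [h0, zero_comp]

lemma keyVanish {M X : T} (hX : thick {M} X) :
    ∃ i : ℤ, ∀ m : ℤ, m < i → ∀ Z, Z ∈ tleMn M m → ∀ f : X ⟶ Z, f = 0 := by
  induction hX with
  | @of W h =>
      refine ⟨0, fun m hm Z hZ f => ?_⟩
      rw [Set.mem_singleton_iff] at h
      subst h
      have h0 : f ≫ (shiftFunctorZero T ℤ).inv.app Z = 0 := hZ 0 hm _
      calc f = (f ≫ (shiftFunctorZero T ℤ).inv.app Z) ≫
          (shiftFunctorZero T ℤ).hom.app Z := by simp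
      _ = 0 := by rw [h0, zero_comp]
  | zero h => exact ⟨0, fun m _ Z _ f => h.eq_of_src f 0⟩
  | @shift W hW n ih =>
      obtain ⟨i, hi⟩ := ih
      refine ⟨i - n, fun m hm Z hZ f => ?_⟩
      have hZ' := tleMn_shift hZ (-n)
      rw [sub_neg_eq_add] at hZ'
      have e := (shiftFunctorCompIsoId T n (-n) (by ring)).app W
      have h0 : e.inv ≫ (shiftFunctor T (-n)).map f = 0 :=
        hi (m + n) (by omega) _ hZ' _
      have h1 : (shiftFunctor T (-n)).map f = 0 := by
        calc (shiftFunctor T (-n)).map f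
            = e.hom ≫ (e.inv ≫ (shiftFunctor T (-n)).map f) := by simp
        _ = 0 := by rw [h0, comp_zero]
      exact (shiftFunctor T (-n)).map_injective (by rw [h1, Functor.map_zero])
  | @ext A Z' B f g h hT hA hB ihA ihB =>
      obtain ⟨iA, hiA⟩ := ihA
      obtain ⟨iB, hiB⟩ := ihB
      refine ⟨min iA iB, fun m hm Z hZ φ => ?_⟩
      have h1 : f ≫ φ = 0 :=
        hiA m (lt_of_lt_of_le hm (min_le_left _ _)) Z hZ _
      obtain ⟨ψ, hψ⟩ := Triangle.yoneda_exact₂ _ hT φ h1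
      rw [hψ, hiB m (lt_of_lt_of_le hm (min_le_right _ _)) Z hZ ψ]
      exact comp_zero
  | @smd W V ι ρ hir hV ih =>
      obtain ⟨j, hj⟩ := ih
      refine ⟨j, fun m hm Z hZ f => ?_⟩
      have h0 : ρ ≫ f = 0 := hj m hm Z hZ _
      calc f = ι ≫ (ρ ≫ f) := by rw [← Category.assoc, hir, Category.id_comp]
      _ = 0 := by rw [h0, comp_zero]

lemma keyBij {M X : T} {i : ℤ}
    (hi : ∀ m : ℤ, m < i → ∀ Z, Z ∈ tleMn M m → ∀ f : X ⟶ Z, f = 0)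
    {Y Y₁ Y₂ : T} (a : Y₁ ⟶ Y) (b : Y ⟶ Y₂) (c : Y₂ ⟶ Y₁⟦(1:ℤ)⟧)
    (hT : Triangle.mk a b c ∈ distTriang T) {m : ℤ} (hm : m < i)
    (hY₁ : Y₁ ∈ tleMn M m) :
    Function.Bijective (fun f : X ⟶ Y => f ≫ b) := by
  constructor
  · intro u v huv
    simp only at huv
    have h0 : (u - v) ≫ b = 0 := by rw [Preadditive.sub_comp, huv, sub_self]
    obtain ⟨g, hg⟩ := Triangle.coyoneda_exact₂ _ hT (u - v) h0
    have : g = 0 := hi m hm Y₁ hY₁ g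
    rw [this, zero_comp] at hg
    exact sub_eq_zero.mp hg
  · intro g
    have hY₁' := tleMn_shift hY₁ 1
    have h0 : g ≫ c = 0 := hi (m - 1) (by omega) _ hY₁' _
    obtain ⟨f, hf⟩ := Triangle.coyoneda_exact₃ _ hT g h0
    exact ⟨f, hf.symm⟩

/-- for an ST-triple `(C, D, M)`, `X ∈ C` and `Y ∈ T`, the canonical map
`Hom(X, Y) → Hom(X, σ_M^{≥ -n} Y)` is bijective for all sufficiently large `n`; in
particular `Hom(X, Y)` is the inverse limit of the `Hom(X, σ_M^{≥ -n} Y)`. -/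
theorem stmt13 {R : Type*} [CommRing R] [IsArtinianRing R] [CategoryTheory.Linear R T]
    [IsIdempotentComplete T]
    (C D : Set T) (M : T) (hST : IsSTTriple R C D M)
    (X : T) (hX : X ∈ C) (Y : T) :
    (∃ N : ℤ, ∀ n : ℤ, N ≤ n →
      ∀ (Y₁ Y₂ : T) (a : Y₁ ⟶ Y) (b : Y ⟶ Y₂) (c : Y₂ ⟶ Y₁⟦(1:ℤ)⟧),
        (Triangle.mk a b c ∈ distTriang T) → Y₁ ∈ tleMn M (-n-1) → Y₂ ∈ tgeMn M (-n) →
        Function.Bijective (fun f : X ⟶ Y => f ≫ b)) ∧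
    (∀ (Y₁ Y₂ : ℕ → T) (a : ∀ n, Y₁ n ⟶ Y) (b : ∀ n, Y ⟶ Y₂ n)
      (c : ∀ n, Y₂ n ⟶ (Y₁ n)⟦(1:ℤ)⟧),
      (∀ n, Triangle.mk (a n) (b n) (c n) ∈ distTriang T) →
      (∀ n : ℕ, Y₁ n ∈ tleMn M (-(n:ℤ)-1)) → (∀ n : ℕ, Y₂ n ∈ tgeMn M (-(n:ℤ))) →
      ∀ (p : ∀ n : ℕ, Y₂ (n+1) ⟶ Y₂ n) (hp : ∀ n, b (n+1) ≫ p n = b n),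
      Function.Bijective
        (fun f : X ⟶ Y =>
          (⟨fun n => f ≫ b n, fun n => by rw [Category.assoc, hp]⟩ :
            {u : ∀ n : ℕ, X ⟶ Y₂ n // ∀ n, u (n+1) ≫ p n = u n}))) := by
  obtain ⟨i, hi⟩ := keyVanish ((hST.generates X).mp hX)
  constructor
  · refine ⟨-i, fun n hn Y₁ Y₂ a b c hT h1 _ => ?_⟩
    exact keyBij hi a b c hT (show -n - 1 < i by omega) h1
  · intro Y₁ Y₂ a b c hT h1 _ p hp
    set N : ℕ := (-i).toNat with hN
    have hNi : -i ≤ (N : ℤ) := Int.self_le_toNat _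
    have hbij : ∀ n : ℕ, N ≤ n → Function.Bijective (fun f : X ⟶ Y => f ≫ b n) := by
      intro n hn
      have hn' : (N : ℤ) ≤ (n : ℤ) := Int.ofNat_le.mpr hn
      exact keyBij hi (a n) (b n) (c n) (hT n) (show -(n:ℤ) - 1 < i by omega) (h1 n)
    -- chain compositions
    have chain : ∀ m n : ℕ, m ≤ n → ∃ q : Y₂ n ⟶ Y₂ m,
        b n ≫ q = b m ∧
        ∀ (u : ∀ n : ℕ, X ⟶ Y₂ n), (∀ n, u (n+1) ≫ p n = u n) →
          u n ≫ q = u m := by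
      intro m n h
      obtain ⟨k, rfl⟩ := Nat.exists_eq_add_of_le h
      clear h
      induction k with
      | zero => exact ⟨𝟙 _, by simp, fun u _ => by simp⟩
      | succ k ihk =>
          obtain ⟨q, hq1, hq2⟩ := ihk
          refine ⟨p (m + k) ≫ q, ?_, fun u hu => ?_⟩
          · show b ((m + k) + 1) ≫ p (m + k) ≫ q = b m
            rw [← Category.assoc, hp, hq1]
          · show u ((m + k) + 1) ≫ p (m + k) ≫ q = u m
            rw [← Category.assoc, hu, hq2 u hu]
    constructor
    · intro u v huv
      have := congrFun (congrArg Subtype.val huv) N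
      simp only at this
      exact (hbij N le_rfl).injective this
    · rintro ⟨u, hu⟩
      obtain ⟨f, hf⟩ := (hbij N le_rfl).surjective (u N)
      simp only at hf
      refine ⟨f, Subtype.ext (funext fun m => ?_)⟩
      simp only
      -- let m' := max m N
      obtain ⟨q1, hq1b, hq1u⟩ := chain m (max m N) (le_max_left m N)
      obtain ⟨q2, hq2b, hq2u⟩ := chain N (max m N) (le_max_right m N)
      -- show f ≫ b (max m N) = u (max m N)
      obtain ⟨g, hg⟩ := (hbij (max m N) (le_max_right m N)).surjective (u (max m N))
      simp only at hg
      have hgN : g ≫ b N = u N := by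
        calc g ≫ b N = g ≫ b (max m N) ≫ q2 := by rw [hq2b]
        _ = u (max m N) ≫ q2 := by rw [← Category.assoc, hg]
        _ = u N := hq2u u hu
      have hgf : g = f := (hbij N le_rfl).injective (by show g ≫ b N = f ≫ b N; rw [hgN, hf])
      calc f ≫ b m = f ≫ b (max m N) ≫ q1 := by rw [hq1b]
      _ = u (max m N) ≫ q1 := by rw [← Category.assoc, ← hgf, hg]
      _ = u m := hq1u u hu

end STPaper
end
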